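/- Let n ≥ 2 and let x_1, …, x_n and u_1, …, u_n be unit vectors in a real inner product space (e.g. ℝ³). Suppose there exist real numbers λ_1, …, λ_{n−1} > 0 such that x_i − x_{i+1} = λ_i (u_i + u_{i+1}) for every i = 1, …, n−1, and suppose there exist a unit vector v and a real number η > 0 such that ⟨u_i, v⟩ ≥ η for all i = 1, …, n. Let ξ_i denote the angle between the vectors x_i and x_{i+1}, and assume ξ_i < π for each i = 1, …, n−1. Then Σ_{i=1}^{n−1} ξ_i < π/η. -/

import Mathlib

open scoped RealInnerProductSpace
open Real

/-- **Lemma 1 (Bárány–Kuperberg–Zamfirescu).**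
Let `x 1, …, x n` and `u 1, …, u n` be unit vectors in a real inner product space such
that `x i − x (i+1) = λ i • (u i + u (i+1))` with `λ i > 0` for `i = 1, …, n−1`.
If there is a unit vector `v` with `⟪u i, v⟫ ≥ η > 0` for all `i`, and each angle
`ξ i` between `x i` and `x (i+1)` is less than `π`, then `∑ ξ i < π / η`. -/
theorem sum_angles_lt_pi_div_eta
    {E : Type*} [NormedAddCommGroup E] [InnerProductSpace ℝ E]
    (n : ℕ) (hn : 2 ≤ n) (x u : ℕ → E)
    (hx : ∀ i ∈ Finset.Icc 1 n, ‖x i‖ = 1)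
    (hu : ∀ i ∈ Finset.Icc 1 n, ‖u i‖ = 1)
    (lam : ℕ → ℝ)
    (hlam : ∀ i ∈ Finset.Icc 1 (n - 1), 0 < lam i)
    (hrel : ∀ i ∈ Finset.Icc 1 (n - 1), x i - x (i + 1) = lam i • (u i + u (i + 1)))
    (v : E) (hv : ‖v‖ = 1) (η : ℝ) (hη : 0 < η)
    (huv : ∀ i ∈ Finset.Icc 1 n, η ≤ ⟪u i, v⟫)
    (hξ : ∀ i ∈ Finset.Icc 1 (n - 1), InnerProductGeometry.angle (x i) (x (i + 1)) < π) :
    ∑ i ∈ Finset.Icc 1 (n - 1), InnerProductGeometry.angle (x i) (x (i + 1)) < π / η := by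
  set S := Finset.Icc 1 (n - 1) with hS
  set ξ : ℕ → ℝ := fun i => InnerProductGeometry.angle (x i) (x (i + 1)) with hξdef
  have hπ : (0:ℝ) < π := Real.pi_pos
  -- membership facts
  have hmem : ∀ i ∈ S, i ∈ Finset.Icc 1 n ∧ i + 1 ∈ Finset.Icc 1 n := by
    intro i hi
    rw [hS, Finset.mem_Icc] at hi
    have h1 : i ≤ n - 1 := hi.2
    have h2 : i + 1 ≤ n := by omega
    exact ⟨Finset.mem_Icc.mpr ⟨hi.1, by omega⟩, Finset.mem_Icc.mpr ⟨by omega, h2⟩⟩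
  -- Step A : ‖x i - x (i+1)‖ = 2 * sin (ξ i / 2)
  have hnormA : ∀ i ∈ S, ‖x i - x (i + 1)‖ = 2 * Real.sin (ξ i / 2) := by
    intro i hi
    obtain ⟨hi1, hi2⟩ := hmem i hi
    have hx1 := hx i hi1
    have hx2 := hx (i + 1) hi2
    have hcos : Real.cos (ξ i) = ⟪x i, x (i + 1)⟫ := by
      have := InnerProductGeometry.cos_angle (x i) (x (i + 1))
      rw [hx1, hx2] at this
      simpa using this
    have hsq : ‖x i - x (i + 1)‖ ^ 2 = 2 - 2 * Real.cos (ξ i) := by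
      rw [@norm_sub_sq_real, hx1, hx2, hcos]; ring
    have hcos2 : 2 - 2 * Real.cos (ξ i) = (2 * Real.sin (ξ i / 2)) ^ 2 := by
      have hdb : Real.cos (ξ i) = 2 * Real.cos (ξ i / 2) ^ 2 - 1 := by
        have h := Real.cos_two_mul (ξ i / 2)
        rw [show 2 * (ξ i / 2) = ξ i by ring] at h
        exact h
      have hpyth := Real.sin_sq_add_cos_sq (ξ i / 2)
      nlinarith [hdb, hpyth]
    have hξnn : 0 ≤ ξ i := InnerProductGeometry.angle_nonneg _ _
    have hξle : ξ i ≤ π := InnerProductGeometry.angle_le_pi _ _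
    have hsin_nn : 0 ≤ Real.sin (ξ i / 2) :=
      Real.sin_nonneg_of_nonneg_of_le_pi (by linarith) (by linarith)
    have : ‖x i - x (i + 1)‖ ^ 2 = (2 * Real.sin (ξ i / 2)) ^ 2 := by
      rw [hsq, hcos2]
    have hnn : (0:ℝ) ≤ ‖x i - x (i + 1)‖ := norm_nonneg _
    nlinarith [this, hnn, hsin_nn]
  -- Step B : η * ‖x i - x (i+1)‖ ≤ ⟪x i - x (i+1), v⟫
  have hB : ∀ i ∈ S, η * ‖x i - x (i + 1)‖ ≤ ⟪x i - x (i + 1), v⟫ := by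
    intro i hi
    obtain ⟨hi1, hi2⟩ := hmem i hi
    have hl := hlam i hi
    have hr := hrel i hi
    have hinner : ⟪x i - x (i + 1), v⟫ = lam i * (⟪u i, v⟫ + ⟪u (i + 1), v⟫) := by
      rw [hr, real_inner_smul_left, inner_add_left]
    have hin_ge : lam i * (2 * η) ≤ ⟪x i - x (i + 1), v⟫ := by
      rw [hinner]
      have := huv i hi1
      have := huv (i + 1) hi2
      nlinarith
    have hnle : ‖x i - x (i + 1)‖ ≤ lam i * 2 := by
      rw [hr, norm_smul, Real.norm_eq_abs, abs_of_pos hl]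
      have : ‖u i + u (i + 1)‖ ≤ 2 := by
        calc ‖u i + u (i + 1)‖ ≤ ‖u i‖ + ‖u (i + 1)‖ := norm_add_le _ _
        _ = 2 := by rw [hu i hi1, hu (i + 1) hi2]; norm_num
      nlinarith
    nlinarith
  -- Telescoping sum
  have htel : ∑ i ∈ S, ⟪x i - x (i + 1), v⟫ = ⟪x 1, v⟫ - ⟪x n, v⟫ := by
    have h1 : S = Finset.Ico 1 n := by
      rw [hS, ← Finset.Ico_add_one_right_eq_Icc]
      congr 1
      omega
    rw [h1, Finset.sum_Ico_eq_sum_range]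
    have : ∀ i, ⟪x i - x (i + 1), v⟫ = ⟪x i, v⟫ - ⟪x (i + 1), v⟫ := fun i => by
      rw [inner_sub_left]
    simp_rw [this]
    have := Finset.sum_range_sub' (f := fun i => ⟪x (1 + i), v⟫) (n := n - 1)
    simp only [add_zero] at this
    rw [show 1 + (n - 1) = n by omega] at this
    exact this
  -- bound the telescoped inner product by 2
  have hmem1 : (1 : ℕ) ∈ Finset.Icc 1 n := Finset.mem_Icc.mpr ⟨le_refl 1, by omega⟩
  have hmemn : n ∈ Finset.Icc 1 n := Finset.mem_Icc.mpr ⟨by omega, le_refl n⟩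
  have hbound : ∑ i ∈ S, ⟪x i - x (i + 1), v⟫ ≤ 2 := by
    rw [htel]
    have h1 : ⟪x 1, v⟫ ≤ 1 := by
      have := real_inner_le_norm (x 1) v
      rw [hx 1 hmem1, hv] at this
      linarith
    have h2 : -1 ≤ ⟪x n, v⟫ := by
      have := abs_real_inner_le_norm (x n) v
      rw [hx n hmemn, hv] at this
      have := neg_abs_le ⟪x n, v⟫
      linarith [abs_le.mp (by linarith [abs_real_inner_le_norm (x n) v] :
        |⟪x n, v⟫| ≤ (1:ℝ))]
    linarith
  -- Step C : (2/π) * ξ i ≤ ‖x i - x (i+1)‖, strict when ξ i > 0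
  have hC : ∀ i ∈ S, 2 / π * ξ i ≤ ‖x i - x (i + 1)‖ := by
    intro i hi
    rw [hnormA i hi]
    have hξnn : 0 ≤ ξ i := InnerProductGeometry.angle_nonneg _ _
    have hξle : ξ i ≤ π := InnerProductGeometry.angle_le_pi _ _
    have := Real.mul_le_sin (x := ξ i / 2) (by linarith) (by linarith)
    calc 2 / π * ξ i = 2 * (2 / π * (ξ i / 2)) := by ring
      _ ≤ 2 * Real.sin (ξ i / 2) := by linarith
  -- main chain
  have hsum_le : ∑ i ∈ S, η * ‖x i - x (i + 1)‖ ≤ 2 := by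
    calc ∑ i ∈ S, η * ‖x i - x (i + 1)‖ ≤ ∑ i ∈ S, ⟪x i - x (i + 1), v⟫ :=
          Finset.sum_le_sum hB
      _ ≤ 2 := hbound
  by_cases hall : ∀ i ∈ S, ξ i = 0
  · have : ∑ i ∈ S, ξ i = 0 := Finset.sum_eq_zero hall
    rw [hξdef] at this ⊢
    rw [this]
    positivity
  · push_neg at hall
    obtain ⟨j, hj, hjne⟩ := hall
    have hjpos : 0 < ξ j := lt_of_le_of_ne (InnerProductGeometry.angle_nonneg _ _) (Ne.symm hjne)
    have hstrict : ∑ i ∈ S, 2 / π * ξ i < ∑ i ∈ S, ‖x i - x (i + 1)‖ := by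
      apply Finset.sum_lt_sum hC
      refine ⟨j, hj, ?_⟩
      rw [hnormA j hj]
      have hξle : ξ j < π := hξ j hj
      have := Real.mul_lt_sin (x := ξ j / 2) (by linarith) (by linarith)
      calc 2 / π * ξ j = 2 * (2 / π * (ξ j / 2)) := by ring
        _ < 2 * Real.sin (ξ j / 2) := by linarith
    have hηsum : η * ∑ i ∈ S, ‖x i - x (i + 1)‖ ≤ 2 := by
      rw [Finset.mul_sum]
      exact hsum_le
    have h1 : η * ∑ i ∈ S, 2 / π * ξ i < 2 := by
      have := mul_lt_mul_of_pos_left hstrict hη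
      linarith
    rw [← Finset.mul_sum] at h1
    have h3 : η * ∑ i ∈ S, ξ i < π := by
      have hh := mul_lt_mul_of_pos_right h1 hπ
      have heq : η * (2 / π * ∑ i ∈ S, ξ i) * π = 2 * (η * ∑ i ∈ S, ξ i) := by
        field_simp
      rw [heq] at hh
      linarith
    rw [lt_div_iff₀ hη]
    linarith
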